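/- If D is an ε³-near clique and C = K_{ε²}(D) ∩ D, then |C| ≥ (1−ε)|D| − 1/ε². -/

import Mathlib

open Finset
open scoped Classical

/-- `Knear G α X` = set of vertices adjacent to all but an `α` fraction of `X`. -/
noncomputable def Knear {V : Type*} [Fintype V] (G : SimpleGraph V) (α : ℝ)
    (X : Finset V) : Finset V :=
  Finset.univ.filter fun v =>
    (1 - α) * (X.card : ℝ) ≤ ((X.filter fun u => G.Adj v u).card : ℝ)

/-- `Tnear G ε X = K_ε(K_{2ε²}(X)) ∩ K_{2ε²}(X)`. -/
noncomputable def Tnear {V : Type*} [Fintype V] (G : SimpleGraph V) (ε : ℝ)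
    (X : Finset V) : Finset V :=
  Knear G ε (Knear G (2 * ε ^ 2) X) ∩ Knear G (2 * ε ^ 2) X

/-- Number of ordered pairs `(u,v) ∈ U × U` with `u ≠ v` and `{u,v} ∈ E`. -/
noncomputable def epairs {V : Type*} (G : SimpleGraph V) (U : Finset V) : ℕ :=
  ((U ×ˢ U).filter fun p => p.1 ≠ p.2 ∧ G.Adj p.1 p.2).card

/-- If `D` is an `ε³`-near clique and `C = K_{ε²}(D) ∩ D`,
then `|C| ≥ (1−ε)|D| − 1/ε²`. -/
theorem card_C_lower_bound {V : Type*} [Fintype V] (G : SimpleGraph V)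
    (ε : ℝ) (hε : 0 < ε) (D : Finset V)
    (hD : (epairs G D : ℝ) ≥ (1 - ε ^ 3) * (D.card : ℝ) * ((D.card : ℝ) - 1)) :
    (((Knear G (ε ^ 2) D ∩ D).card : ℝ)) ≥ (1 - ε) * (D.card : ℝ) - 1 / ε ^ 2 := by
  classical
  set B := D \ Knear G (ε ^ 2) D with hB
  have hcardCB : ((Knear G (ε ^ 2) D ∩ D).card : ℝ) = (D.card : ℝ) - B.card := by
    have h : (Knear G (ε ^ 2) D ∩ D).card + B.card = D.card := by
      rw [hB, inter_comm]
      exact card_inter_add_card_sdiff D _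
    have := congrArg (fun n : ℕ => (n : ℝ)) h
    push_cast at this
    linarith
  -- non-edge pairs
  set N := (D ×ˢ D).filter (fun p : V × V => p.1 ≠ p.2 ∧ ¬ G.Adj p.1 p.2) with hN
  -- split offDiag into edges and non-edges
  have hsplit : epairs G D + N.card = D.offDiag.card := by
    rw [epairs, hN, Finset.offDiag]
    have h1 : ((D ×ˢ D).filter fun p : V × V => p.1 ≠ p.2 ∧ G.Adj p.1 p.2)
        = ((D ×ˢ D).filter fun p : V × V => p.1 ≠ p.2).filter fun p => G.Adj p.1 p.2 := by
      rw [filter_filter]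
    have h2 : ((D ×ˢ D).filter fun p : V × V => p.1 ≠ p.2 ∧ ¬ G.Adj p.1 p.2)
        = ((D ×ˢ D).filter fun p : V × V => p.1 ≠ p.2).filter fun p => ¬ G.Adj p.1 p.2 := by
      rw [filter_filter]
    rw [h1, h2]
    rw [card_filter_add_card_filter_not]
    change _ = D.offDiag.card
    congr 1
    ext p
    simp only [mem_filter, mem_product, mem_offDiag, and_assoc]
  have hoffcast : (D.offDiag.card : ℝ) = (D.card : ℝ) * D.card - D.card := by
    rw [Finset.offDiag_card]
    have h1 : D.card ≤ D.card * D.card := by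
      rcases Nat.eq_zero_or_pos D.card with h | h
      · simp [h]
      · exact Nat.le_mul_of_pos_left _ h
    rw [Nat.cast_sub h1]
    push_cast
    ring
  -- upper bound on N
  have hNub : (N.card : ℝ) ≤ ε ^ 3 * (D.card : ℝ) * ((D.card : ℝ) - 1) := by
    have := congrArg (fun n : ℕ => (n : ℝ)) hsplit
    push_cast at this
    nlinarith [hD]
  -- per-vertex sets
  set S : V → Finset V := fun v => D.filter fun u => v ≠ u ∧ ¬ G.Adj v u with hS
  have hSlb : ∀ v ∈ B, ε ^ 2 * (D.card : ℝ) - 1 ≤ ((S v).card : ℝ) := by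
    intro v hv
    rw [hB, mem_sdiff] at hv
    obtain ⟨hvD, hvK⟩ := hv
    rw [Knear, mem_filter] at hvK
    push_neg at hvK
    have hadj := hvK (mem_univ v)
    -- adjcard < (1 - ε^2) * |D|
    have hnonadj : (D.filter fun u => G.Adj v u).card
        + (D.filter fun u => ¬ G.Adj v u).card = D.card :=
      card_filter_add_card_filter_not _
    have hsub : (D.filter fun u => ¬ G.Adj v u).erase v ⊆ S v := by
      intro u hu
      rw [mem_erase, mem_filter] at hu
      rw [hS]
      simp only [mem_filter]
      exact ⟨hu.2.1, fun h => hu.1 h.symm, hu.2.2⟩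
    have hcer : (D.filter fun u => ¬ G.Adj v u).card - 1
        ≤ ((D.filter fun u => ¬ G.Adj v u).erase v).card := by
      have := Finset.pred_card_le_card_erase (a := v) (s := D.filter fun u => ¬ G.Adj v u)
      omega
    have h1 : ((D.filter fun u => ¬ G.Adj v u).card : ℝ) - 1 ≤ ((S v).card : ℝ) := by
      have h2 : ((D.filter fun u => ¬ G.Adj v u).erase v).card ≤ (S v).card :=
        card_le_card hsub
      have h4 : (D.filter fun u => ¬ G.Adj v u).card ≤ (S v).card + 1 := by omega
      have h5 : ((D.filter fun u => ¬ G.Adj v u).card : ℝ) ≤ ((S v).card : ℝ) + 1 := by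
        exact_mod_cast h4
      linarith
    have hcnt := congrArg (fun n : ℕ => (n : ℝ)) hnonadj
    push_cast at hcnt
    nlinarith [hadj]
  -- sum lower bound: ∑_{v∈B} |S v| ≤ N.card
  have hsum : ∑ v ∈ B, ((S v).card) ≤ N.card := by
    have hinj : ∀ v : V, Function.Injective (Prod.mk v : V → V × V) := by
      intro v a b h; exact (Prod.mk.injEq _ _ _ _).mp h |>.2
    have hdisj : (B : Set V).PairwiseDisjoint fun v => (S v).image (Prod.mk v) := by
      intro v _ w _ hvw
      simp only [Finset.disjoint_left]
      intro p hp hq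
      simp only [mem_image] at hp hq
      obtain ⟨a, _, ha⟩ := hp
      obtain ⟨b, _, hb⟩ := hq
      apply hvw
      rw [← ha] at hb
      exact ((Prod.mk.injEq _ _ _ _).mp hb).1.symm
    calc ∑ v ∈ B, (S v).card = ∑ v ∈ B, ((S v).image (Prod.mk v)).card := by
          refine Finset.sum_congr rfl fun v _ => ?_
          exact (card_image_of_injective _ (hinj v)).symm
      _ = (B.biUnion fun v => (S v).image (Prod.mk v)).card :=
          (card_biUnion (fun v hv w hw hvw => hdisj hv hw hvw)).symm
      _ ≤ N.card := by
          apply card_le_card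
          intro p hp
          simp only [mem_biUnion, mem_image] at hp
          obtain ⟨v, hvB, u, hu, hpu⟩ := hp
          rw [hS] at hu
          simp only [mem_filter] at hu
          rw [hN, mem_filter, mem_product]
          rw [← hpu]
          exact ⟨⟨(mem_sdiff.mp hvB).1, hu.1⟩, hu.2.1, hu.2.2⟩
  -- combine
  have hsumR : (B.card : ℝ) * (ε ^ 2 * (D.card : ℝ) - 1) ≤ (N.card : ℝ) := by
    have h1 : (B.card : ℝ) * (ε ^ 2 * (D.card : ℝ) - 1) ≤ ∑ v ∈ B, ((S v).card : ℝ) := by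
      calc (B.card : ℝ) * (ε ^ 2 * (D.card : ℝ) - 1)
          = ∑ _v ∈ B, (ε ^ 2 * (D.card : ℝ) - 1) := by rw [Finset.sum_const, nsmul_eq_mul]
        _ ≤ ∑ v ∈ B, ((S v).card : ℝ) := Finset.sum_le_sum hSlb
    have h2 : (∑ v ∈ B, ((S v).card : ℝ)) ≤ (N.card : ℝ) := by
      rw [← Nat.cast_sum]
      exact_mod_cast hsum
    linarith
  have hBD : (B.card : ℝ) ≤ D.card := by exact_mod_cast card_le_card (sdiff_subset)
  have hB0 : (0:ℝ) ≤ B.card := Nat.cast_nonneg _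
  have hD0 : (0:ℝ) ≤ D.card := Nat.cast_nonneg _
  -- final algebra
  rcases eq_or_lt_of_le hD0 with h0 | h0
  · have : (D.card : ℝ) = 0 := h0.symm
    rw [hcardCB, this]
    have : (B.card : ℝ) = 0 := le_antisymm (by rw [← this]; exact hBD) hB0
    rw [this]
    have : 0 < 1 / ε ^ 2 := by positivity
    linarith
  · -- ε² |B| |D| ≤ ε³ |D|² + |B| ≤ ε³|D|² + |D|
    have key : ε ^ 2 * (B.card : ℝ) * D.card ≤ ε ^ 3 * (D.card:ℝ) * D.card + D.card := by
      nlinarith [hNub, hsumR, hBD, mul_nonneg (le_of_lt (pow_pos hε 3)) hD0]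
    have hε2 : (0:ℝ) < ε ^ 2 := by positivity
    have h1 : ε ^ 2 * (B.card : ℝ) ≤ ε ^ 3 * D.card + 1 := by
      nlinarith [key, h0]
    have hBub : (B.card : ℝ) ≤ ε * D.card + 1 / ε ^ 2 := by
      rw [← mul_le_mul_iff_right₀ hε2]
      calc ε ^ 2 * (B.card : ℝ) ≤ ε ^ 3 * D.card + 1 := h1
        _ = ε ^ 2 * (ε * D.card + 1 / ε ^ 2) := by field_simp
    rw [hcardCB]
    linarith
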